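/- Let v1, v2, v3 be unit vectors in ℝ² that are linearly independent over ℚ, with inner products γ = (v1,v2), α = (v2,v3), β = (v3,v1). Then α ≠ βγ, β ≠ αγ, and γ ≠ αβ. -/

import Mathlib

open RealInnerProductSpace

lemma abs_inner_lt_one_aux (x y : EuclideanSpace ℝ (Fin 2))
    (hx : ‖x‖ = 1) (hy : ‖y‖ = 1) (hne : x ≠ y) (hne' : x ≠ -y) :
    |(inner ℝ x y : ℝ)| < 1 := by
  have hle : |(inner ℝ x y : ℝ)| ≤ 1 := by
    have := abs_real_inner_le_norm x y
    rwa [hx, hy, one_mul] at this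
  rcases lt_or_eq_of_le hle with h | h
  · exact h
  · exfalso
    rcases (abs_eq (by norm_num : (0:ℝ) ≤ 1)).mp h with h1 | h1
    · exact hne ((inner_eq_one_iff_of_norm_eq_one hx hy).mp h1)
    · have hy' : ‖-y‖ = 1 := by rwa [norm_neg]
      have : (inner ℝ x (-y) : ℝ) = 1 := by rw [inner_neg_right]; linarith
      exact hne' ((inner_eq_one_iff_of_norm_eq_one hx hy').mp this)

lemma gram_aux (α β γ : ℝ) (hD : 1 + 2 * α * β * γ - α ^ 2 - β ^ 2 - γ ^ 2 = 0)
    (hα2 : α ^ 2 < 1) (hβ2 : β ^ 2 < 1) (hγ2 : γ ^ 2 < 1) (h : α = β * γ) : False := by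
  nlinarith [mul_pos (by linarith : (0:ℝ) < 1 - β ^ 2) (by linarith : (0:ℝ) < 1 - γ ^ 2)]

theorem stmt_12 (v₁ v₂ v₃ : EuclideanSpace ℝ (Fin 2))
    (h1 : ‖v₁‖ = 1) (h2 : ‖v₂‖ = 1) (h3 : ‖v₃‖ = 1)
    (hind : LinearIndependent ℚ ![v₁, v₂, v₃])
    (α β γ : ℝ) (hγ : inner ℝ v₁ v₂ = γ) (hα : inner ℝ v₂ v₃ = α) (hβ : inner ℝ v₃ v₁ = β) :
    α ≠ β * γ ∧ β ≠ α * γ ∧ γ ≠ α * β := by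
  -- helper: no rational relation
  have hq : ∀ g : Fin 3 → ℚ, (g 0 • v₁ + g 1 • v₂ + g 2 • v₃ = 0) → ∀ i, g i = 0 := by
    intro g hg i
    have := Fintype.linearIndependent_iff.mp hind g ?_ i
    · exact this
    · simpa [Fin.sum_univ_three] using hg
  -- pairwise distinctness facts
  have hne12 : v₁ ≠ v₂ := by
    intro h
    have : (1 : ℚ) = 0 := by
      apply hq ![1, -1, 0] _ 0
      simp [h]
    norm_num at this
  have hne12' : v₁ ≠ -v₂ := by
    intro h
    have : (1 : ℚ) = 0 := by
      apply hq ![1, 1, 0] _ 0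
      simp [h]
    norm_num at this
  have hne23 : v₂ ≠ v₃ := by
    intro h
    have : (1 : ℚ) = 0 := by
      apply hq ![0, 1, -1] _ 1
      simp [h]
    norm_num at this
  have hne23' : v₂ ≠ -v₃ := by
    intro h
    have : (1 : ℚ) = 0 := by
      apply hq ![0, 1, 1] _ 1
      simp [h]
    norm_num at this
  have hne31 : v₃ ≠ v₁ := by
    intro h
    have : (1 : ℚ) = 0 := by
      apply hq ![-1, 0, 1] _ 2
      simp [h]
    norm_num at this
  have hne31' : v₃ ≠ -v₁ := by
    intro h
    have : (1 : ℚ) = 0 := by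
      apply hq ![1, 0, 1] _ 2
      simp [h, add_comm]
    norm_num at this
  have hγlt : |γ| < 1 := hγ ▸ abs_inner_lt_one_aux v₁ v₂ h1 h2 hne12 hne12'
  have hαlt : |α| < 1 := hα ▸ abs_inner_lt_one_aux v₂ v₃ h2 h3 hne23 hne23'
  have hβlt : |β| < 1 := hβ ▸ abs_inner_lt_one_aux v₃ v₁ h3 h1 hne31 hne31'
  have hγ2 : γ ^ 2 < 1 := by nlinarith [sq_abs γ, abs_nonneg γ]
  have hα2 : α ^ 2 < 1 := by nlinarith [sq_abs α, abs_nonneg α]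
  have hβ2 : β ^ 2 < 1 := by nlinarith [sq_abs β, abs_nonneg β]
  -- real linear dependence
  have hnli : ¬ LinearIndependent ℝ ![v₁, v₂, v₃] := by
    intro h
    have := h.fintype_card_le_finrank
    simp [finrank_euclideanSpace] at this
  obtain ⟨g, hsum, i, hgi⟩ := Fintype.not_linearIndependent_iff.mp hnli
  set a := g 0; set b := g 1; set c := g 2
  have hsum' : a • v₁ + b • v₂ + c • v₃ = 0 := by
    simpa [Fin.sum_univ_three] using hsum
  -- inner-self values
  have s1 : (inner ℝ v₁ v₁ : ℝ) = 1 := by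
    rw [real_inner_self_eq_norm_sq, h1]; norm_num
  have s2 : (inner ℝ v₂ v₂ : ℝ) = 1 := by
    rw [real_inner_self_eq_norm_sq, h2]; norm_num
  have s3 : (inner ℝ v₃ v₃ : ℝ) = 1 := by
    rw [real_inner_self_eq_norm_sq, h3]; norm_num
  have c12 : (inner ℝ v₂ v₁ : ℝ) = γ := by rw [real_inner_comm]; exact hγ
  have c23 : (inner ℝ v₃ v₂ : ℝ) = α := by rw [real_inner_comm]; exact hα
  have c31 : (inner ℝ v₁ v₃ : ℝ) = β := by rw [real_inner_comm]; exact hβ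
  -- three equations
  have e1 : a + b * γ + c * β = 0 := by
    have := congrArg (fun w => (inner ℝ w v₁ : ℝ)) hsum'
    simpa only [inner_add_left, real_inner_smul_left, one_mul, mul_one, inner_zero_left, s1, c12, hβ] using this
  have e2 : a * γ + b + c * α = 0 := by
    have := congrArg (fun w => (inner ℝ w v₂ : ℝ)) hsum'
    simpa only [inner_add_left, real_inner_smul_left, one_mul, mul_one, inner_zero_left, s2, hγ, c23] using this
  have e3 : a * β + b * α + c = 0 := by
    have := congrArg (fun w => (inner ℝ w v₃ : ℝ)) hsum'
    simpa only [inner_add_left, real_inner_smul_left, one_mul, mul_one, inner_zero_left, s3, c31, hα] using this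
  -- Gram determinant vanishes
  have hD : 1 + 2 * α * β * γ - α ^ 2 - β ^ 2 - γ ^ 2 = 0 := by
    fin_cases i
    · have ha : a ≠ 0 := hgi
      have : (1 + 2 * α * β * γ - α ^ 2 - β ^ 2 - γ ^ 2) * a = 0 := by
        linear_combination (1 - α ^ 2) * e1 + (α * β - γ) * e2 + (α * γ - β) * e3
      exact (mul_eq_zero.mp this).resolve_right ha
    · have hb : b ≠ 0 := hgi
      have : (1 + 2 * α * β * γ - α ^ 2 - β ^ 2 - γ ^ 2) * b = 0 := by
        linear_combination (α * β - γ) * e1 + (1 - β ^ 2) * e2 + (β * γ - α) * e3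
      exact (mul_eq_zero.mp this).resolve_right hb
    · have hc : c ≠ 0 := hgi
      have : (1 + 2 * α * β * γ - α ^ 2 - β ^ 2 - γ ^ 2) * c = 0 := by
        linear_combination (α * γ - β) * e1 + (β * γ - α) * e2 + (1 - γ ^ 2) * e3
      exact (mul_eq_zero.mp this).resolve_right hc
  exact ⟨fun h => gram_aux α β γ hD hα2 hβ2 hγ2 h, fun h => gram_aux β α γ (by linarith) hβ2 hα2 hγ2 h,
    fun h => gram_aux γ α β (by linarith) hγ2 hα2 hβ2 h⟩
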